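/- Define a chord diagram of order n to be a perfect matching (fixed-point-free involution) of 2n points placed in cyclic order and labeled 1, 2, …, 2n; each matched pair is called a chord. Allow two kinds of moves on chord diagrams: (relabeling) a cyclic rotation of the labels of all 2n points; (band slide) if x and y are cyclically adjacent points belonging to two different chords, then the point x may be deleted from its position and reinserted at a position cyclically adjacent (on either side) to the partner of y, keeping x matched to its original partner, after which the 2n points are relabeled 1,…,2n in the resulting cyclic order. Then every chord diagram of order n can be transformed, by a finite sequence of relabelings and band slides, into a chord diagram in which every chord joins a point of {1,…,n} to a point of {n+1,…,2n}. -/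

import Mathlib

/-- The relabeling permutation of the `m` cyclically ordered points (labeled by
`ZMod m`) induced by deleting the point `x` from its position and reinserting
it immediately after the point `z`, keeping all other points in their cyclic
order: `x ↦ z`, `t ↦ t - 1` for `t` in the cyclic arc `(x, z]`, and all other
points are unmoved. -/
def movePerm {m : ℕ} (x z : ZMod m) : ZMod m → ZMod m :=
  fun t => if t = x then z else if (t - x).val ≤ (z - x).val then t - 1 else t

/-- The inverse of `movePerm x z`: `z ↦ x`, `t ↦ t + 1` for `t` in the cyclic
arc `[x, z)`, and all other points are unmoved. -/
def movePermInv {m : ℕ} (x z : ZMod m) : ZMod m → ZMod m :=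
  fun t => if t = z then x else if (t - x).val < (z - x).val then t + 1 else t

/-- Relabeling move: a cyclic rotation of the labels of all points.  If the
labels are rotated by `k`, the matching `f` becomes `t ↦ f (t - k) + k`. -/
def IsRelabeling {m : ℕ} (f g : ZMod m → ZMod m) : Prop :=
  ∃ k : ZMod m, g = fun t => f (t - k) + k

/-- Band-slide move: if `x` and `y` are cyclically adjacent points belonging to
two different chords (`f x ≠ y`), then `x` may be deleted from its position and
reinserted at a position cyclically adjacent, on either side, to the partner
`f y` of `y` (i.e. immediately after `z = f y` or immediately after
`z = f y - 1`, which is immediately before `f y`), keeping `x` matched to its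
original partner; afterwards the points are relabeled in the resulting cyclic
order, so the new matching is the conjugate of `f` by the relabeling
permutation `movePerm x z`. -/
def IsBandSlide {m : ℕ} (f g : ZMod m → ZMod m) : Prop :=
  ∃ x y z : ZMod m, (y = x + 1 ∨ y = x - 1) ∧ f x ≠ y ∧
    (z = f y ∨ z = f y - 1) ∧
    g = fun t => movePerm x z (f (movePermInv x z t))

/-- A single move on chord diagrams: a relabeling or a band slide. -/
def DiagramMove {m : ℕ} (f g : ZMod m → ZMod m) : Prop :=
  IsRelabeling f g ∨ IsBandSlide f g

set_option linter.unusedSectionVars false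

section Helpers

variable {m : ℕ} [NeZero m]

private lemma zd_val_inj {a b : ZMod m} (h : a.val = b.val) : a = b :=
  ZMod.val_injective m h

private lemma zd_val_sub_val (a b : ZMod m) :
    (a - b).val = if b.val ≤ a.val then a.val - b.val else a.val + m - b.val := by
  by_cases hb : b = 0
  · subst hb; simp [ZMod.val_zero]
  · have hbv : 0 < b.val := Nat.pos_of_ne_zero (fun h => hb ((ZMod.val_eq_zero b).1 h))
    have ha := ZMod.val_lt a
    have hbb := ZMod.val_lt b
    rw [sub_eq_add_neg, ZMod.val_add, ZMod.neg_val, if_neg hb]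
    split_ifs with h
    · have : a.val + (m - b.val) = (a.val - b.val) + m := by omega
      rw [this, Nat.add_mod_right, Nat.mod_eq_of_lt (by omega)]
    · rw [Nat.mod_eq_of_lt (by omega)]; omega

private lemma zd_val_sub_of_le {a b : ZMod m} (h : b.val ≤ a.val) :
    (a - b).val = a.val - b.val := by rw [zd_val_sub_val, if_pos h]

private lemma zd_val_sub_of_gt {a b : ZMod m} (h : ¬ b.val ≤ a.val) :
    (a - b).val = a.val + m - b.val := by rw [zd_val_sub_val, if_neg h]

private lemma zd_val_one (hm : 2 ≤ m) : (1 : ZMod m).val = 1 := by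
  haveI : Fact (1 < m) := ⟨hm⟩
  exact ZMod.val_one m

private lemma zd_val_pos {a : ZMod m} (ha : a ≠ 0) : 0 < a.val :=
  Nat.pos_of_ne_zero (fun h => ha ((ZMod.val_eq_zero a).1 h))

private lemma zd_val_sub_one (hm : 2 ≤ m) {a : ZMod m} (ha : a ≠ 0) :
    (a - 1).val = a.val - 1 := by
  rw [zd_val_sub_of_le (by rw [zd_val_one hm]; exact zd_val_pos ha), zd_val_one hm]

private lemma zd_val_add_one (hm : 2 ≤ m) {a : ZMod m} (ha : a + 1 ≠ 0) :
    (a + 1).val = a.val + 1 := by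
  have h1 : a.val + 1 ≠ m := by
    intro h
    apply ha
    have : ((a.val + 1 : ℕ) : ZMod m) = 0 := by rw [h]; exact ZMod.natCast_self m
    rw [← ZMod.natCast_zmod_val a]
    exact_mod_cast this
  have ha' := ZMod.val_lt a
  rw [ZMod.val_add, zd_val_one hm, Nat.mod_eq_of_lt (by omega)]

private lemma zd_sub_ne_zero {a b : ZMod m} (h : a ≠ b) : a - b ≠ 0 :=
  sub_ne_zero.mpr h

end Helpers
section Moves

variable {m : ℕ} [NeZero m]

private lemma zd_val_neg_one (hm : 2 ≤ m) : (-1 : ZMod m).val = m - 1 := by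
  have h : (-1 : ZMod m) = 0 - 1 := by ring
  rw [h, zd_val_sub_of_gt (by rw [zd_val_one hm, ZMod.val_zero]; omega), ZMod.val_zero,
    zd_val_one hm]
  omega

private lemma movePerm_movePermInv (hm : 2 ≤ m) (x z t : ZMod m) :
    movePerm x z (movePermInv x z t) = t := by
  unfold movePerm movePermInv
  by_cases h1 : t = z
  · simp [h1]
  · have huz : (t - x).val ≠ (z - x).val := fun h => h1 (by
      have := zd_val_inj h
      have : t = z := by linear_combination this
      exact this)
    rw [if_neg h1]
    by_cases h2 : (t - x).val < (z - x).val
    · rw [if_pos h2]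
      have hx : t + 1 ≠ x := by
        intro h
        have he : t - x = -1 := by linear_combination h
        have hv : (t - x).val = m - 1 := by rw [he]; exact zd_val_neg_one hm
        have := ZMod.val_lt (z - x)
        omega
      have hval : (t + 1 - x).val = (t - x).val + 1 := by
        have he : t + 1 - x = (t - x) + 1 := by ring
        rw [he, zd_val_add_one hm (by intro h; exact hx (by linear_combination h))]
      rw [if_neg hx, if_pos (by omega)]
      ring
    · rw [if_neg h2]
      have hx : t ≠ x := by
        intro h
        have : (t - x).val = 0 := by rw [h, sub_self, ZMod.val_zero]
        have hz : 0 < (z - x).val := zd_val_pos (zd_sub_ne_zero (by rw [← h]; exact (Ne.symm h1)))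
        omega
      rw [if_neg hx, if_neg (by omega)]

private lemma movePermInv_movePerm (hm : 2 ≤ m) (x z t : ZMod m) :
    movePermInv x z (movePerm x z t) = t := by
  unfold movePerm movePermInv
  by_cases h1 : t = x
  · simp [h1]
  · have hu : 0 < (t - x).val := zd_val_pos (zd_sub_ne_zero h1)
    rw [if_neg h1]
    by_cases h2 : (t - x).val ≤ (z - x).val
    · rw [if_pos h2]
      have hval : (t - 1 - x).val = (t - x).val - 1 := by
        have he : t - 1 - x = (t - x) - 1 := by ring
        rw [he, zd_val_sub_one hm (zd_sub_ne_zero h1)]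
      have hz : t - 1 ≠ z := by
        intro h
        have : (t - 1 - x).val = (z - x).val := by rw [h]
        omega
      rw [if_neg hz, if_pos (by omega)]
      ring
    · rw [if_neg h2]
      have hz : t ≠ z := by
        intro h
        rw [h] at h2
        omega
      rw [if_neg hz, if_neg (by omega)]

private lemma movePerm_apply_eq (x z : ZMod m) : movePerm x z x = z := by
  unfold movePerm; rw [if_pos rfl]

private lemma movePerm_apply_of_le {x z t : ZMod m} (h1 : t ≠ x)
    (h2 : (t - x).val ≤ (z - x).val) : movePerm x z t = t - 1 := by
  unfold movePerm; rw [if_neg h1, if_pos h2]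

private lemma movePerm_apply_of_gt {x z t : ZMod m} (h1 : t ≠ x)
    (h2 : ¬ (t - x).val ≤ (z - x).val) : movePerm x z t = t := by
  unfold movePerm; rw [if_neg h1, if_neg h2]

private lemma movePermInv_apply_eq (x z : ZMod m) : movePermInv x z z = x := by
  unfold movePermInv; rw [if_pos rfl]

private lemma movePermInv_apply_of_lt {x z t : ZMod m} (h1 : t ≠ z)
    (h2 : (t - x).val < (z - x).val) : movePermInv x z t = t + 1 := by
  unfold movePermInv; rw [if_neg h1, if_pos h2]

private lemma movePermInv_apply_of_ge {x z t : ZMod m} (h1 : t ≠ z)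
    (h2 : ¬ (t - x).val < (z - x).val) : movePermInv x z t = t := by
  unfold movePermInv; rw [if_neg h1, if_neg h2]

/-- The key computation: the composite of the two relabeling permutations used in
the two band slides equals the adjacent transposition followed by rotation by one. -/
private lemma movePerm_comp (hm : 2 ≤ m) {x w : ZMod m} (hwx : w ≠ x) (hwx1 : w ≠ x + 1)
    (t : ZMod m) :
    movePerm w x (movePerm x w t) = Equiv.swap x (x + 1) t - 1 := by
  have hd0 : 0 < (w - x).val := zd_val_pos (zd_sub_ne_zero hwx)
  have hd2 : 2 ≤ (w - x).val := by
    have hne1 : (w - x).val ≠ 1 := by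
      intro hv
      apply hwx1
      have : w - x = 1 := zd_val_inj (by rw [hv, zd_val_one hm])
      linear_combination this
    omega
  have hdm : (w - x).val < m := ZMod.val_lt _
  have hm3 : 3 ≤ m := by omega
  have h10 : (1 : ZMod m) ≠ 0 := by
    intro h
    have := congrArg ZMod.val h
    rw [zd_val_one hm, ZMod.val_zero] at this
    omega
  have hxw : (x - w).val = m - (w - x).val := by
    have he : x - w = -(w - x) := by ring
    rw [he, ZMod.neg_val, if_neg (zd_sub_ne_zero hwx)]
  by_cases h1 : t = x
  · subst h1
    rw [Equiv.swap_apply_left, movePerm_apply_eq, movePerm_apply_eq]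
    ring
  · by_cases h2 : t = x + 1
    · subst h2
      rw [Equiv.swap_apply_right]
      have hval : (x + 1 - x).val = 1 := by
        have he : x + 1 - x = 1 := by ring
        rw [he, zd_val_one hm]
      have e1 : movePerm x w (x + 1) = x := by
        rw [movePerm_apply_of_le h1 (by omega)]
        ring
      rw [e1, movePerm_apply_of_le (Ne.symm hwx) le_rfl]
    · rw [Equiv.swap_apply_of_ne_of_ne h1 h2]
      have hu0 : 0 < (t - x).val := zd_val_pos (zd_sub_ne_zero h1)
      have hu2 : 2 ≤ (t - x).val := by
        have hne1 : (t - x).val ≠ 1 := by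
          intro hv
          apply h2
          have : t - x = 1 := zd_val_inj (by rw [hv, zd_val_one hm])
          linear_combination this
        omega
      have hum : (t - x).val < m := ZMod.val_lt _
      by_cases h3 : (t - x).val ≤ (w - x).val
      · rw [movePerm_apply_of_le h1 h3]
        have hval : (t - 1 - x).val = (t - x).val - 1 := by
          have he : t - 1 - x = (t - x) - 1 := by ring
          rw [he, zd_val_sub_one hm (zd_sub_ne_zero h1)]
        have htw : t - 1 ≠ w := by
          intro h
          have : (t - 1 - x).val = (w - x).val := by rw [h]
          omega
        have hval2 : (t - 1 - w).val = (t - x).val - 1 + m - (w - x).val := by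
          have he : t - 1 - w = (t - x - 1) - (w - x) := by ring
          have hv1 : (t - x - 1).val = (t - x).val - 1 := zd_val_sub_one hm (zd_sub_ne_zero h1)
          rw [he, zd_val_sub_of_gt (by omega), hv1]
        rw [movePerm_apply_of_gt htw (by omega)]
      · rw [movePerm_apply_of_gt h1 h3]
        have htw : t ≠ w := by
          intro h
          rw [h] at h3
          omega
        have hval2 : (t - w).val = (t - x).val - (w - x).val := by
          have he : t - w = (t - x) - (w - x) := by ring
          rw [he, zd_val_sub_of_le (by omega)]
        rw [movePerm_apply_of_le htw (by omega)]

end Moves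
section Reach

variable {m : ℕ} [NeZero m]

/-- Conjugating by an adjacent transposition is achievable by two band slides
followed by a relabeling (or is trivial when the two points are matched). -/
private lemma reach_swapAdj (hm : 2 ≤ m) (f : ZMod m → ZMod m)
    (hinv : ∀ a, f (f a) = a) (hfpf : ∀ a, f a ≠ a) (x : ZMod m) :
    Relation.ReflTransGen DiagramMove f
      (fun t => Equiv.swap x (x + 1) (f (Equiv.swap x (x + 1) t))) := by
  have h10 : (1 : ZMod m) ≠ 0 := by
    intro h
    have := congrArg ZMod.val h
    rw [zd_val_one hm, ZMod.val_zero] at this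
    omega
  have hx1x : x + 1 ≠ x := by
    intro h
    exact h10 (by linear_combination h)
  by_cases hx : f x = x + 1
  · have hfx1 : f (x + 1) = x := by rw [← hx, hinv]
    have heq : (fun t => Equiv.swap x (x + 1) (f (Equiv.swap x (x + 1) t))) = f := by
      funext t
      by_cases h1 : t = x
      · subst h1
        rw [Equiv.swap_apply_left, hfx1, Equiv.swap_apply_left, hx]
      · by_cases h2 : t = x + 1
        · subst h2
          rw [Equiv.swap_apply_right, hx, Equiv.swap_apply_right, hfx1]
        · rw [Equiv.swap_apply_of_ne_of_ne h1 h2,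
            Equiv.swap_apply_of_ne_of_ne
              (fun h => h2 (by rw [← hinv t, h, hx]))
              (fun h => h1 (by rw [← hinv t, h, hfx1]))]
    rw [heq]
  · -- the interesting case: two band slides and one relabeling
    set w := f (x + 1) with hw
    have hwx1 : w ≠ x + 1 := hfpf (x + 1)
    have hwx : w ≠ x := by
      intro h
      apply hx
      rw [← hinv (x + 1), ← hw, h]
    have hd0 : 0 < (w - x).val := zd_val_pos (zd_sub_ne_zero hwx)
    have hd2 : 2 ≤ (w - x).val := by
      have hne1 : (w - x).val ≠ 1 := by
        intro hv
        apply hwx1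
        have : w - x = 1 := zd_val_inj (by rw [hv, zd_val_one hm])
        linear_combination this
      omega
    have hdm : (w - x).val < m := ZMod.val_lt _
    set f1 : ZMod m → ZMod m := fun t => movePerm x w (f (movePermInv x w t)) with hf1
    have step1 : DiagramMove f f1 :=
      Or.inr ⟨x, x + 1, w, Or.inl rfl, hx, Or.inl hw, rfl⟩
    -- key values of f1
    have hI1w : movePermInv x w w = x := movePermInv_apply_eq x w
    have hf1w : f1 w = movePerm x w (f x) := by rw [hf1]; simp only [hI1w]
    have hfxx : f x ≠ x := hfpf x
    have hfxw : f x ≠ w := by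
      intro h
      have h' := congrArg f h
      rw [hinv, hw, hinv] at h'
      exact hx1x h'.symm
    have hw1w : w - 1 ≠ w := by
      intro h
      apply h10
      linear_combination -h
    have hw1val : (w - 1 - x).val = (w - x).val - 1 := by
      have he : w - 1 - x = (w - x) - 1 := by ring
      rw [he, zd_val_sub_one hm (zd_sub_ne_zero hwx)]
    have hI1w1 : movePermInv x w (w - 1) = w := by
      rw [movePermInv_apply_of_lt hw1w (by omega)]
      ring
    have hfw : f w = x + 1 := by rw [hw, hinv]
    have hx1val : (x + 1 - x).val = 1 := by
      have he : x + 1 - x = 1 := by ring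
      rw [he, zd_val_one hm]
    have hf1w1 : f1 (w - 1) = x := by
      rw [hf1]
      simp only [hI1w1, hfw]
      rw [movePerm_apply_of_le hx1x (by omega)]
      ring
    have hf1wne : f1 w ≠ w - 1 := by
      rw [hf1w]
      by_cases hc : (f x - x).val ≤ (w - x).val
      · rw [movePerm_apply_of_le hfxx hc]
        intro h
        exact hfxw (by linear_combination h)
      · rw [movePerm_apply_of_gt hfxx hc]
        intro h
        have : (f x - x).val = (w - x).val - 1 := by rw [h, hw1val]
        omega
    set f2 : ZMod m → ZMod m := fun t => movePerm w x (f1 (movePermInv w x t)) with hf2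
    have step2 : DiagramMove f1 f2 :=
      Or.inr ⟨w, w - 1, x, Or.inr rfl, hf1wne, Or.inl hf1w1.symm, rfl⟩
    set g : ZMod m → ZMod m := fun t => f2 (t - 1) + 1 with hg
    have step3 : DiagramMove f2 g := Or.inl ⟨1, rfl⟩
    have hs : ∀ t' : ZMod m,
        movePermInv x w (movePermInv w x t') = Equiv.swap x (x + 1) (t' + 1) := by
      intro t'
      have h2 := movePerm_comp hm hwx hwx1 (movePermInv x w (movePermInv w x t'))
      rw [movePerm_movePermInv hm, movePerm_movePermInv hm] at h2
      have h3 : Equiv.swap x (x + 1) (movePermInv x w (movePermInv w x t')) = t' + 1 := by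
        linear_combination -h2
      calc movePermInv x w (movePermInv w x t')
          = Equiv.swap x (x + 1) (Equiv.swap x (x + 1)
              (movePermInv x w (movePermInv w x t'))) := (Equiv.swap_apply_self _ _ _).symm
        _ = Equiv.swap x (x + 1) (t' + 1) := by rw [h3]
    have hfinal : g = fun t => Equiv.swap x (x + 1) (f (Equiv.swap x (x + 1) t)) := by
      funext t
      show movePerm w x (movePerm x w (f (movePermInv x w (movePermInv w x (t - 1))))) + 1 = _
      rw [hs (t - 1), movePerm_comp hm hwx hwx1]
      have he : t - 1 + 1 = t := by ring
      rw [he]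
      ring
    rw [← hfinal]
    exact Relation.ReflTransGen.head step1
      (Relation.ReflTransGen.head step2 (Relation.ReflTransGen.single step3))

end Reach
section ReachConj

variable {m : ℕ} [NeZero m]

private lemma conj_props {α : Type*} (σ : α → α) (hσ : ∀ a, σ (σ a) = a)
    {f : α → α} (hinv : ∀ a, f (f a) = a) (hfpf : ∀ a, f a ≠ a) :
    (∀ a, (fun t => σ (f (σ t))) ((fun t => σ (f (σ t))) a) = a) ∧
    (∀ a, (fun t => σ (f (σ t))) a ≠ a) := by
  constructor
  · intro a
    simp only [hσ, hinv]
  · intro a h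
    simp only at h
    have : f (σ a) = σ a := by
      have := congrArg σ h
      rwa [hσ] at this
    exact hfpf _ this

/-- Conjugation by an arbitrary transposition is achievable. -/
private lemma reach_swap (hm : 2 ≤ m) :
    ∀ k : ℕ, ∀ a b : ZMod m, (b - a).val = k →
      ∀ f : ZMod m → ZMod m, (∀ t, f (f t) = t) → (∀ t, f t ≠ t) →
      Relation.ReflTransGen DiagramMove f
        (fun t => Equiv.swap a b (f (Equiv.swap a b t))) := by
  intro k
  induction k using Nat.strong_induction_on with
  | _ k ih =>
    intro a b hk f hinv hfpf
    rcases Nat.lt_or_ge k 2 with hk2 | hk2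
    · rcases Nat.lt_or_ge k 1 with hk1 | hk1
      · -- k = 0 : a = b
        have h0 : k = 0 := by omega
        have : b = a := by
          have : b - a = 0 := (ZMod.val_eq_zero _).1 (by rw [hk, h0])
          linear_combination this
        subst this
        have : (fun t => Equiv.swap b b (f (Equiv.swap b b t))) = f := by
          funext t
          rw [Equiv.swap_self, Equiv.refl_apply, Equiv.refl_apply]
        rw [this]
      · -- k = 1 : b = a + 1
        have h1 : k = 1 := by omega
        have hba : b = a + 1 := by
          have : b - a = 1 := zd_val_inj (by rw [hk, h1, zd_val_one hm])
          linear_combination this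
        subst hba
        exact reach_swapAdj hm f hinv hfpf a
    · -- k ≥ 2
      have hba : b ≠ a := by
        intro h
        rw [h, sub_self, ZMod.val_zero] at hk
        omega
      have hb1a : b - 1 ≠ a := by
        intro h
        have : (b - 1 - a).val = 0 := by rw [h, sub_self, ZMod.val_zero]
        rw [show b - 1 - a = (b - a) - 1 by ring,
          zd_val_sub_one hm (zd_sub_ne_zero hba), hk] at this
        omega
      have hk' : (b - 1 - a).val = k - 1 := by
        rw [show b - 1 - a = (b - a) - 1 by ring,
          zd_val_sub_one hm (zd_sub_ne_zero hba), hk]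
      have hb1b : b - 1 ≠ b := by
        intro h
        have h1 : (1 : ZMod m) = 0 := by linear_combination -h
        have := congrArg ZMod.val h1
        rw [zd_val_one hm, ZMod.val_zero] at this
        omega
      set σ : Equiv.Perm (ZMod m) := Equiv.swap (b - 1) b with hσdef
      set τ : Equiv.Perm (ZMod m) := Equiv.swap a (b - 1) with hτdef
      have hσσ : ∀ u, σ (σ u) = u := fun u => Equiv.swap_apply_self _ _ _
      have hττ : ∀ u, τ (τ u) = u := fun u => Equiv.swap_apply_self _ _ _
      -- step A : conjugate by σ (adjacent since b = (b-1)+1)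
      have hstepA := reach_swapAdj hm f hinv hfpf (b - 1)
      rw [show b - 1 + 1 = b by ring] at hstepA
      set f1 : ZMod m → ZMod m := fun t => σ (f (σ t)) with hf1
      obtain ⟨hinv1, hfpf1⟩ := conj_props σ hσσ hinv hfpf
      -- step B : conjugate by τ, using the induction hypothesis
      have hstepB := ih (k - 1) (by omega) a (b - 1) hk' f1 hinv1 hfpf1
      set f2 : ZMod m → ZMod m := fun t => τ (f1 (τ t)) with hf2
      obtain ⟨hinv2, hfpf2⟩ := conj_props τ hττ hinv1 hfpf1
      -- step C : conjugate by σ again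
      have hstepC := reach_swapAdj hm f2 hinv2 hfpf2 (b - 1)
      rw [show b - 1 + 1 = b by ring] at hstepC
      set f3 : ZMod m → ZMod m := fun t => σ (f2 (σ t)) with hf3
      have hcomp : ∀ u, σ (τ (σ u)) = Equiv.swap a b u := by
        intro u
        have h := Equiv.swap_mul_swap_mul_swap (x := a) (y := b - 1) (z := b) hb1a.symm hba.symm
        calc σ (τ (σ u)) = (σ * τ * σ) u := rfl
          _ = Equiv.swap b a u := by rw [hσdef, hτdef, h]
          _ = Equiv.swap a b u := by rw [Equiv.swap_comm]
      have hfinal : f3 = fun t => Equiv.swap a b (f (Equiv.swap a b t)) := by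
        funext t
        show σ (τ (σ (f (σ (τ (σ t)))))) = _
        rw [hcomp, hcomp]
      rw [← hfinal]
      exact (hstepA.trans hstepB).trans hstepC

/-- Conjugation by an arbitrary permutation is achievable. -/
private lemma reach_conj (hm : 2 ≤ m) (π : Equiv.Perm (ZMod m)) :
    ∀ f : ZMod m → ZMod m, (∀ t, f (f t) = t) → (∀ t, f t ≠ t) →
      Relation.ReflTransGen DiagramMove f (fun t => π (f (π⁻¹ t))) := by
  refine Equiv.Perm.swap_induction_on π ?_ ?_
  · intro f hinv hfpf
    have : (fun t => (1 : Equiv.Perm (ZMod m)) (f ((1 : Equiv.Perm (ZMod m))⁻¹ t))) = f := by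
      funext t
      simp
    rw [this]
  · intro p a b hab ih
    intro f hinv hfpf
    have r1 := ih f hinv hfpf
    have hp : ∀ u, (p : Equiv.Perm (ZMod m)) ((p⁻¹ : Equiv.Perm (ZMod m)) u) = u := fun u =>
      Equiv.apply_symm_apply p u
    set f1 : ZMod m → ZMod m := fun t => p (f (p⁻¹ t)) with hf1
    have hinv1 : ∀ t, f1 (f1 t) = t := by
      intro t
      simp only [hf1, Equiv.Perm.coe_inv, Equiv.symm_apply_apply, hinv, Equiv.apply_symm_apply]
    have hfpf1 : ∀ t, f1 t ≠ t := by
      intro t h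
      simp only [hf1] at h
      have : f (p⁻¹ t) = p⁻¹ t := by
        have := congrArg (p⁻¹ : Equiv.Perm (ZMod m)) h
        rwa [Equiv.Perm.coe_inv, Equiv.symm_apply_apply] at this
      exact hfpf _ this
    have r2 := reach_swap hm (b - a).val a b rfl f1 hinv1 hfpf1
    have hfinal : (fun t => Equiv.swap a b (f1 (Equiv.swap a b t)))
        = fun t => (Equiv.swap a b * p) (f ((Equiv.swap a b * p)⁻¹ t)) := by
      funext t
      simp only [hf1, mul_inv_rev, Equiv.Perm.mul_apply, Equiv.swap_inv]
    rw [← hfinal]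
    exact r1.trans r2

end ReachConj
/-- A chord diagram of order `n` is a perfect matching
(fixed-point-free involution `f`) of `2n` points placed in cyclic order,
labeled by `ZMod (2n)`; each matched pair `{x, f x}` is a chord.  Every chord
diagram of order `n` can be transformed, by a finite sequence of relabelings
and band slides, into a chord diagram in which every chord joins a point of
the first half (labels with value `< n`) to a point of the second half
(labels with value `≥ n`). -/
theorem chord_diagram_reducible_to_bipartite
    (n : ℕ) (f : ZMod (2*n) → ZMod (2*n))
    (hinv : ∀ x, f (f x) = x) (hfpf : ∀ x, f x ≠ x) :
    ∃ g : ZMod (2*n) → ZMod (2*n),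
      Relation.ReflTransGen DiagramMove f g ∧
      ∀ i : ZMod (2*n), i.val < n → n ≤ (g i).val := by
  rcases Nat.eq_zero_or_pos n with hn | hn
  · subst hn
    exact ⟨f, Relation.ReflTransGen.refl, fun i hi => absurd hi (Nat.not_lt_zero _)⟩
  classical
  have hm : 2 ≤ 2 * n := by omega
  haveI : NeZero (2 * n) := ⟨by omega⟩
  set A : Set (ZMod (2 * n)) := {x | x.val < (f x).val} with hA
  have hfA : ∀ x, x ∈ A ↔ f x ∉ A := by
    intro x
    simp only [hA, Set.mem_setOf_eq, hinv]
    constructor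
    · intro h; omega
    · intro h
      have hne : (f x).val ≠ x.val := fun hh => hfpf x (ZMod.val_injective _ hh)
      omega
  set FH : Set (ZMod (2 * n)) := {i | i.val < n} with hFH
  -- cardinalities
  have ecard : Fintype.card A + Fintype.card (↥(Aᶜ)) = 2 * n := by
    have h1 : Fintype.card (A ⊕ (↥(Aᶜ))) = Fintype.card (ZMod (2 * n)) :=
      Fintype.card_congr (Equiv.Set.sumCompl A)
    rw [Fintype.card_sum, ZMod.card] at h1
    exact h1
  have eAc : A ≃ (↥(Aᶜ)) :=
    { toFun := fun a => ⟨f a, (hfA a).1 a.2⟩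
      invFun := fun a => ⟨f a, (hfA _).2 (by rw [hinv]; exact a.2)⟩
      left_inv := fun a => Subtype.ext (hinv a)
      right_inv := fun a => Subtype.ext (hinv a) }
  have hcardA : Fintype.card A = n := by
    have := Fintype.card_congr eAc
    omega
  have eFH : FH ≃ Fin n :=
    { toFun := fun i => ⟨(i : ZMod (2*n)).val, i.2⟩
      invFun := fun j => ⟨((j : ℕ) : ZMod (2*n)), by
        show (((j : ℕ) : ZMod (2*n))).val < n
        rw [ZMod.val_cast_of_lt (by omega)]
        exact j.2⟩
      left_inv := fun i => Subtype.ext (ZMod.natCast_zmod_val _)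
      right_inv := fun j => Fin.ext (ZMod.val_cast_of_lt (by omega)) }
  have hcardFH : Fintype.card FH = n := by
    rw [Fintype.card_congr eFH, Fintype.card_fin]
  have ecardFH : Fintype.card FH + Fintype.card (↥(FHᶜ)) = 2 * n := by
    have h1 : Fintype.card (FH ⊕ (↥(FHᶜ))) = Fintype.card (ZMod (2 * n)) :=
      Fintype.card_congr (Equiv.Set.sumCompl FH)
    rw [Fintype.card_sum, ZMod.card] at h1
    exact h1
  have e1 : A ≃ FH := Fintype.equivOfCardEq (by rw [hcardA, hcardFH])
  have e2 : (↥(Aᶜ)) ≃ (↥(FHᶜ)) := Fintype.equivOfCardEq (by omega)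
  set π : Equiv.Perm (ZMod (2 * n)) :=
    ((Equiv.Set.sumCompl A).symm.trans ((Equiv.sumCongr e1 e2).trans
      (Equiv.Set.sumCompl FH))) with hπ
  have hπA : ∀ u : ZMod (2 * n), u ∈ A → π u ∈ FH := by
    intro u hu
    show ((Equiv.Set.sumCompl A).symm.trans ((Equiv.sumCongr e1 e2).trans
      (Equiv.Set.sumCompl FH))) u ∈ FH
    rw [Equiv.trans_apply, Equiv.trans_apply, Equiv.Set.sumCompl_symm_apply_of_mem hu,
      Equiv.sumCongr_apply, Sum.map_inl, Equiv.Set.sumCompl_apply_inl]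
    exact (e1 ⟨u, hu⟩).2
  have hπAc : ∀ u : ZMod (2 * n), u ∉ A → π u ∉ FH := by
    intro u hu
    show ((Equiv.Set.sumCompl A).symm.trans ((Equiv.sumCongr e1 e2).trans
      (Equiv.Set.sumCompl FH))) u ∉ FH
    rw [Equiv.trans_apply, Equiv.trans_apply, Equiv.Set.sumCompl_symm_apply_of_notMem hu,
      Equiv.sumCongr_apply, Sum.map_inr, Equiv.Set.sumCompl_apply_inr]
    exact (e2 ⟨u, hu⟩).2
  refine ⟨fun t => π (f (π⁻¹ t)), reach_conj hm π f hinv hfpf, ?_⟩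
  intro i hi
  have h1 : π⁻¹ i ∈ A := by
    by_contra hc
    have := hπAc _ hc
    rw [Equiv.Perm.coe_inv, Equiv.apply_symm_apply] at this
    exact this hi
  have h2 : f (π⁻¹ i) ∉ A := (hfA _).1 h1
  have h3 : π (f (π⁻¹ i)) ∉ FH := hπAc _ h2
  exact Nat.le_of_not_lt h3
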